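/- (Characterization C3 of GLS.) A formula φ is a theorem of the Hilbert system GLS if and only if for every GL-model ⟨W,R,V⟩ and every infinitely descending sequence w₁ R⁻¹ w₂ R⁻¹ w₃ ⋯ in W there is a number i such that V(w_j, φ) = true for every j ≥ i. -/

import Mathlib

/-- Modal formulas: propositional variables, ⊥, →, □. -/
inductive Formula : Type
  | var : ℕ → Formula
  | bot : Formula
  | imp : Formula → Formula → Formula
  | box : Formula → Formula
deriving DecidableEq

/-- Levels of sequents in GLS_seq: first level (⇒) and second level (⇛). -/
inductive SeqLevel : Type
  | one
  | two
deriving DecidableEq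

/-- The set of subformulas of a formula. -/
def Formula.subf : Formula → Finset Formula
  | .var p => {.var p}
  | .bot => {.bot}
  | .imp φ ψ => insert (.imp φ ψ) (φ.subf ∪ ψ.subf)
  | .box φ => insert (.box φ) φ.subf

/-- SF(Ψ,Φ): all subformulas of formulas in Ψ ∪ Φ. -/
def SF (Ψ Φ : Finset Formula) : Finset Formula := (Ψ ∪ Φ).biUnion Formula.subf

def Formula.isBox : Formula → Bool
  | .box _ => true
  | _ => false

def Formula.unbox : Formula → Formula
  | .box φ => φ
  | φ => φ

/-- Θ_□ = {φ : □φ ∈ Θ}. -/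
def boxInv (Θ : Finset Formula) : Finset Formula :=
  (Θ.filter fun ψ => ψ.isBox).image Formula.unbox

/-- The sequent calculus GLS_seq, on sequents of two levels.  The Bool parameter
records whether the cut rule may be used: `GLSSeq true` is provability in GLS_seq,
`GLSSeq false` is cut-free provability.  The first-level fragment is exactly GL_seq. -/
inductive GLSSeq : Bool → SeqLevel → Finset Formula → Finset Formula → Prop
  | init (c lv φ) : GLSSeq c lv {φ} {φ}
  | initBot (c lv) : GLSSeq c lv {Formula.bot} ∅
  | cut {lv Γ Δ} (φ) : GLSSeq true lv Γ (insert φ Δ) → GLSSeq true lv (insert φ Γ) Δ →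
      GLSSeq true lv Γ Δ
  | weak {c lv Γ Δ Γ' Δ'} : Γ ⊆ Γ' → Δ ⊆ Δ' → GLSSeq c lv Γ Δ → GLSSeq c lv Γ' Δ'
  | impL {c lv Γ Δ φ ψ} : GLSSeq c lv Γ (insert φ Δ) → GLSSeq c lv (insert ψ Γ) Δ →
      GLSSeq c lv (insert (.imp φ ψ) Γ) Δ
  | impR {c lv Γ Δ φ ψ} : GLSSeq c lv (insert φ Γ) (insert ψ Δ) →
      GLSSeq c lv Γ (insert (.imp φ ψ) Δ)
  | boxGL {c Γ φ} : GLSSeq c .one (Γ ∪ Γ.image .box ∪ {.box φ}) {φ} →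
      GLSSeq c .one (Γ.image .box) {.box φ}
  | boxL {c Γ Δ} (φ) : GLSSeq c .two (insert φ Γ) Δ → GLSSeq c .two (insert (.box φ) Γ) Δ
  | lift {c Γ Δ} : GLSSeq c .one Γ Δ → GLSSeq c .two Γ Δ

/-- The sequent calculus GL_seq (on first-level sequents only). -/
inductive GLSeq : Bool → Finset Formula → Finset Formula → Prop
  | init (c φ) : GLSeq c {φ} {φ}
  | initBot (c) : GLSeq c {Formula.bot} ∅
  | cut {Γ Δ} (φ) : GLSeq true Γ (insert φ Δ) → GLSeq true (insert φ Γ) Δ → GLSeq true Γ Δ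
  | weak {c Γ Δ Γ' Δ'} : Γ ⊆ Γ' → Δ ⊆ Δ' → GLSeq c Γ Δ → GLSeq c Γ' Δ'
  | impL {c Γ Δ φ ψ} : GLSeq c Γ (insert φ Δ) → GLSeq c (insert ψ Γ) Δ →
      GLSeq c (insert (.imp φ ψ) Γ) Δ
  | impR {c Γ Δ φ ψ} : GLSeq c (insert φ Γ) (insert ψ Δ) → GLSeq c Γ (insert (.imp φ ψ) Δ)
  | boxGL {c Γ φ} : GLSeq c (Γ ∪ Γ.image .box ∪ {.box φ}) {φ} → GLSeq c (Γ.image .box) {.box φ}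

/-- Proof trees of GLS_seq (cut included). -/
inductive GLSTree : SeqLevel → Finset Formula → Finset Formula → Type
  | init (lv φ) : GLSTree lv {φ} {φ}
  | initBot (lv) : GLSTree lv {Formula.bot} ∅
  | cut {lv Γ Δ} (φ) : GLSTree lv Γ (insert φ Δ) → GLSTree lv (insert φ Γ) Δ → GLSTree lv Γ Δ
  | weak {lv Γ Δ} (Γ' Δ' : Finset Formula) : Γ ⊆ Γ' → Δ ⊆ Δ' → GLSTree lv Γ Δ → GLSTree lv Γ' Δ'
  | impL {lv Γ Δ} (φ ψ) : GLSTree lv Γ (insert φ Δ) → GLSTree lv (insert ψ Γ) Δ →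
      GLSTree lv (insert (.imp φ ψ) Γ) Δ
  | impR {lv Γ Δ} (φ ψ) : GLSTree lv (insert φ Γ) (insert ψ Δ) → GLSTree lv Γ (insert (.imp φ ψ) Δ)
  | boxGL (Γ φ) : GLSTree .one (Γ ∪ Γ.image .box ∪ {.box φ}) {φ} → GLSTree .one (Γ.image .box) {.box φ}
  | boxL {Γ Δ} (φ) : GLSTree .two (insert φ Γ) Δ → GLSTree .two (insert (.box φ) Γ) Δ
  | lift {Γ Δ} : GLSTree .one Γ Δ → GLSTree .two Γ Δ

/-- The set of principal formulas of all (□L) rules occurring in a proof tree. -/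
def GLSTree.principals : ∀ {lv Γ Δ}, GLSTree lv Γ Δ → Finset Formula
  | _, _, _, .init _ _ => ∅
  | _, _, _, .initBot _ => ∅
  | _, _, _, .cut _ t₁ t₂ => t₁.principals ∪ t₂.principals
  | _, _, _, .weak _ _ _ _ t => t.principals
  | _, _, _, .impL _ _ t₁ t₂ => t₁.principals ∪ t₂.principals
  | _, _, _, .impR _ _ t => t.principals
  | _, _, _, .boxGL _ _ t => t.principals
  | _, _, _, .boxL φ t => insert (Formula.box φ) t.principals
  | _, _, _, .lift t => t.principals

/-- A proof tree bundled with its level and conclusion. -/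
abbrev PGLSTree : Type :=
  (lv : SeqLevel) × (Γ : Finset Formula) × (Δ : Finset Formula) × GLSTree lv Γ Δ

/-- The set of subproofs of a proof tree (including the tree itself). -/
def GLSTree.subproofs {lv Γ Δ} (t : GLSTree lv Γ Δ) : Set PGLSTree :=
  insert ⟨lv, Γ, Δ, t⟩ <|
    match lv, Γ, Δ, t with
    | _, _, _, .init _ _ => ∅
    | _, _, _, .initBot _ => ∅
    | _, _, _, .cut _ t₁ t₂ => t₁.subproofs ∪ t₂.subproofs
    | _, _, _, .weak _ _ _ _ t₁ => t₁.subproofs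
    | _, _, _, .impL _ _ t₁ t₂ => t₁.subproofs ∪ t₂.subproofs
    | _, _, _, .impR _ _ t₁ => t₁.subproofs
    | _, _, _, .boxGL _ _ t₁ => t₁.subproofs
    | _, _, _, .boxL _ t₁ => t₁.subproofs
    | _, _, _, .lift t₁ => t₁.subproofs

/-- Kripke satisfaction over a frame `R` with atomic valuation `v`. -/
def KSat {W : Type} (R : W → W → Prop) (v : W → ℕ → Prop) : Formula → W → Prop
  | .var p, w => v w p
  | .bot, _ => False
  | .imp φ ψ, w => KSat R v φ w → KSat R v ψ w
  | .box φ, w => ∀ w', R w w' → KSat R v φ w'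

/-- A GL-model: a nonempty, transitive, converse well-founded Kripke model. -/
structure GLModel where
  World : Type
  ne : Nonempty World
  R : World → World → Prop
  trans : Transitive R
  cwf : ∀ f : ℕ → World, ¬ ∀ i, R (f i) (f (i + 1))
  val : World → ℕ → Prop

/-- Truth of a formula at a world of a GL-model. -/
def GLModel.sat (M : GLModel) (w : M.World) (φ : Formula) : Prop := KSat M.R M.val φ w

/-- Truth of a sequent Γ ▸ Δ at a world: some γ ∈ Γ is false or some δ ∈ Δ is true. -/
def GLModel.seqTrue (M : GLModel) (w : M.World) (Γ Δ : Finset Formula) : Prop :=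
  (∃ γ ∈ Γ, ¬ M.sat w γ) ∨ (∃ δ ∈ Δ, M.sat w δ)

/-- w is Σ-reflexive: □α → α is true at w for every □α ∈ Σ. -/
def GLModel.reflexiveFor (M : GLModel) (w : M.World) (S : Finset Formula) : Prop :=
  ∀ α : Formula, Formula.box α ∈ S → M.sat w ((Formula.box α).imp α)

/-- Saturation conditions (→L), (→R) for first-level sequents. -/
def Saturated1 (Γ Δ : Finset Formula) : Prop :=
  (∀ φ ψ : Formula, φ.imp ψ ∈ Γ → φ ∈ Δ ∨ ψ ∈ Γ) ∧
  (∀ φ ψ : Formula, φ.imp ψ ∈ Δ → φ ∈ Γ ∧ ψ ∈ Δ)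

/-- Saturation for second-level sequents: additionally (□L). -/
def Saturated2 (Γ Δ : Finset Formula) : Prop :=
  Saturated1 Γ Δ ∧ ∀ φ : Formula, Formula.box φ ∈ Γ → φ ∈ Γ

def Saturated : SeqLevel → Finset Formula → Finset Formula → Prop
  | .one => Saturated1
  | .two => Saturated2

/-- The Hilbert system GL. -/
inductive GLHilbert : Formula → Prop
  | ax1 (φ ψ : Formula) : GLHilbert (φ.imp (ψ.imp φ))
  | ax2 (φ ψ χ : Formula) :
      GLHilbert ((φ.imp (ψ.imp χ)).imp ((φ.imp ψ).imp (φ.imp χ)))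
  | ax3 (φ : Formula) : GLHilbert (((φ.imp .bot).imp .bot).imp φ)
  | axK (φ ψ : Formula) :
      GLHilbert ((Formula.box (φ.imp ψ)).imp ((Formula.box φ).imp (Formula.box ψ)))
  | axLob (φ : Formula) :
      GLHilbert ((Formula.box ((Formula.box φ).imp φ)).imp (Formula.box φ))
  | mp {φ ψ} : GLHilbert (φ.imp ψ) → GLHilbert φ → GLHilbert ψ
  | nec {φ} : GLHilbert φ → GLHilbert (Formula.box φ)

/-- The Hilbert system GLS: theorems of GL and all □α → α, closed under modus ponens. -/
inductive GLSHilbert : Formula → Prop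
  | gl {φ} : GLHilbert φ → GLSHilbert φ
  | refl (α : Formula) : GLSHilbert ((Formula.box α).imp α)
  | mp {φ ψ} : GLSHilbert (φ.imp ψ) → GLSHilbert φ → GLSHilbert ψ

/-- Conjunction (encoded with → and ⊥) of a list of formulas; empty conjunction is ⊤. -/
def Formula.conj : List Formula → Formula
  | [] => Formula.bot.imp Formula.bot
  | φ :: l => ((φ.imp ((Formula.conj l).imp .bot)).imp .bot)

/-- Membership predicate for the canonical model: saturated first-level sequents over S
that are not cut-free provable in GLS_seq. -/
def W0pred (S : Finset Formula) (s : Finset Formula × Finset Formula) : Prop :=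
  Saturated1 s.1 s.2 ∧ ¬ GLSSeq false SeqLevel.one s.1 s.2 ∧ s.1 ∪ s.2 ⊆ S

/-- Worlds of the canonical model. -/
def W0 (S : Finset Formula) : Type := {s : Finset Formula × Finset Formula // W0pred S s}

/-- Accessibility of the canonical model: (Γ⇒Δ) R₀ (Γ'⇒Δ') iff Γ_□ ⊊ Γ'_□ and Γ_□ ⊆ Γ'. -/
def R0 (S : Finset Formula) (s t : W0 S) : Prop :=
  boxInv s.1.1 ⊂ boxInv t.1.1 ∧ boxInv s.1.1 ⊆ t.1.1

/-- Valuation of the canonical model: p is true at (Γ⇒Δ) iff p ∈ Γ. -/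
def V0 (S : Finset Formula) (s : W0 S) (p : ℕ) : Prop := Formula.var p ∈ s.1.1

/-- The extended set of worlds W = W₀ ∪ ℕ. -/
def Wext (S : Finset Formula) : Type := W0 S ⊕ ℕ

/-- The extended accessibility relation, with distinguished world `wp` in W₀. -/
def Rext (S : Finset Formula) (wp : W0 S) : Wext S → Wext S → Prop
  | Sum.inl x, Sum.inl y => R0 S x y
  | Sum.inr _, Sum.inl y => y = wp ∨ R0 S wp y
  | Sum.inr n, Sum.inr m => m < n
  | Sum.inl _, Sum.inr _ => False

/-- The extended valuation: worlds in ℕ behave like the distinguished world `wp`. -/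
def Vext (S : Finset Formula) (wp : W0 S) : Wext S → ℕ → Prop
  | Sum.inl x, p => V0 S x p
  | Sum.inr _, p => V0 S wp p
namespace C3Aux

open Formula

/-- Provability from a list of hypotheses in the Hilbert system GL. -/
inductive Prov : List Formula → Formula → Prop
  | hyp {Γ φ} : φ ∈ Γ → Prov Γ φ
  | thm {Γ φ} : GLHilbert φ → Prov Γ φ
  | mp {Γ φ ψ} : Prov Γ (φ.imp ψ) → Prov Γ φ → Prov Γ ψ

theorem Prov.weak {Γ Γ' φ} (h : Prov Γ φ) (hs : ∀ x ∈ Γ, x ∈ Γ') : Prov Γ' φ := by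
  induction h generalizing Γ' with
  | hyp h => exact .hyp (hs _ h)
  | thm h => exact .thm h
  | mp _ _ ih1 ih2 => exact .mp (ih1 hs) (ih2 hs)

theorem Prov.weak1 {Γ φ χ} (h : Prov Γ φ) : Prov (χ :: Γ) φ :=
  h.weak fun _ hx => List.mem_cons_of_mem _ hx

theorem imp_self (φ : Formula) : GLHilbert (φ.imp φ) := by
  have h1 := GLHilbert.ax2 φ (φ.imp φ) φ
  have h2 := GLHilbert.ax1 φ (φ.imp φ)
  have h3 := GLHilbert.ax1 φ φ
  exact (h1.mp h2).mp h3

theorem Prov.ded_aux {Δ ψ} (h : Prov Δ ψ) :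
    ∀ {φ : Formula} {Γ : List Formula}, Δ = φ :: Γ → Prov Γ (φ.imp ψ) := by
  induction h with
  | hyp h =>
    intro φ Γ e
    subst e
    rcases List.mem_cons.1 h with h | h
    · subst h; exact .thm (imp_self _)
    · exact .mp (.thm (GLHilbert.ax1 _ φ)) (.hyp h)
  | thm h => exact fun _ => .mp (.thm (GLHilbert.ax1 _ _)) (.thm h)
  | mp _ _ ih1 ih2 =>
    intro φ Γ e
    exact (Prov.mp (.thm (GLHilbert.ax2 _ _ _)) (ih1 e)).mp (ih2 e)

/-- Deduction theorem. -/
theorem Prov.ded {Γ φ ψ} (h : Prov (φ :: Γ) ψ) : Prov Γ (φ.imp ψ) := h.ded_aux rfl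

theorem Prov.undeD {Γ φ ψ} (h : Prov Γ (φ.imp ψ)) : Prov (φ :: Γ) ψ :=
  Prov.mp h.weak1 (.hyp (List.mem_cons_self))

theorem Prov.dne {Γ φ} (h : Prov Γ ((φ.imp .bot).imp .bot)) : Prov Γ φ :=
  Prov.mp (.thm (GLHilbert.ax3 φ)) h

theorem Prov.efq {Γ} (h : Prov Γ .bot) (φ : Formula) : Prov Γ φ :=
  Prov.dne (.mp (.thm (GLHilbert.ax1 .bot (φ.imp .bot))) h)

/-- Case split: if both φ and ¬φ lead to ⊥, then ⊥. -/
theorem Prov.cases {Γ φ} (h1 : Prov (φ :: Γ) .bot) (h2 : Prov ((φ.imp .bot) :: Γ) .bot) :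
    Prov Γ .bot := Prov.mp h1.ded h2.ded.dne

/-- Cut a hypothesis. -/
theorem Prov.cutHyp {Γ φ ψ} (h1 : Prov (φ :: Γ) ψ) (h2 : Prov Γ φ) : Prov Γ ψ :=
  h1.ded.mp h2

/-- Cut a list of hypotheses. -/
theorem Prov.cutList {Γ₂ ψ} : ∀ {Γ₁}, Prov (Γ₁ ++ Γ₂) ψ → (∀ χ ∈ Γ₁, Prov Γ₂ χ) →
    Prov Γ₂ ψ := by
  intro Γ₁
  induction Γ₁ with
  | nil => exact fun h _ => h
  | cons χ L ih =>
    intro h1 h2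
    refine ih ?_ (fun x hx => h2 x (List.mem_cons_of_mem _ hx))
    refine Prov.cutHyp (h1.weak fun x hx => ?_)
      ((h2 χ (List.mem_cons_self)).weak fun x hx => by
        simp only [List.mem_append]; exact Or.inr hx)
    simpa using hx

/-- K-distribution over contexts. -/
theorem Prov.boxed {Γ φ} (h : Prov Γ φ) : Prov (Γ.map Formula.box) (Formula.box φ) := by
  induction h with
  | hyp h => exact .hyp (List.mem_map_of_mem h)
  | thm h => exact .thm h.nec
  | mp _ _ ih1 ih2 => exact (Prov.mp (.thm (GLHilbert.axK _ _)) ih1).mp ih2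

theorem Prov.sound {Γ φ} (h : Prov Γ φ) (hΓ : ∀ x ∈ Γ, GLHilbert x) : GLHilbert φ := by
  induction h with
  | hyp h => exact hΓ _ h
  | thm h => exact h
  | mp _ _ ih1 ih2 => exact ih1.mp ih2

theorem Prov.toGL {φ} (h : Prov [] φ) : GLHilbert φ := h.sound (by simp)

/-- Conjunction. -/
def fand (φ ψ : Formula) : Formula := (φ.imp (ψ.imp .bot)).imp .bot

theorem Prov.pair {Γ φ ψ} (h1 : Prov Γ φ) (h2 : Prov Γ ψ) : Prov Γ (fand φ ψ) := by
  show Prov Γ ((φ.imp (ψ.imp .bot)).imp .bot)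
  apply Prov.ded
  have a : Prov ((φ.imp (ψ.imp .bot)) :: Γ) (φ.imp (ψ.imp .bot)) := .hyp (by simp)
  exact (a.mp h1.weak1).mp h2.weak1

theorem Prov.proj1 {Γ φ ψ} (h : Prov Γ (fand φ ψ)) : Prov Γ φ := by
  apply Prov.dne
  apply Prov.ded
  refine Prov.mp h.weak1 ?_
  apply Prov.ded; apply Prov.ded
  have a : Prov (ψ :: φ :: (φ.imp .bot) :: Γ) (φ.imp .bot) := .hyp (by simp)
  have b : Prov (ψ :: φ :: (φ.imp .bot) :: Γ) φ := .hyp (by simp)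
  exact a.mp b

theorem Prov.proj2 {Γ φ ψ} (h : Prov Γ (fand φ ψ)) : Prov Γ ψ := by
  apply Prov.dne
  apply Prov.ded
  refine Prov.mp h.weak1 ?_
  apply Prov.ded
  exact .hyp (by simp)

theorem Prov.comp {Γ} {α β γ : Formula} (h1 : Prov Γ (α.imp β)) (h2 : Prov Γ (β.imp γ)) :
    Prov Γ (α.imp γ) := by
  apply Prov.ded
  exact Prov.mp h2.weak1 h1.undeD

theorem Prov.distK {Γ} {α β : Formula} (h : Prov Γ ((Formula.box (α.imp β)))) :
    Prov Γ ((Formula.box α).imp (Formula.box β)) :=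
  Prov.mp (.thm (GLHilbert.axK α β)) h

theorem four_aux (α X : Formula) (p1 : Prov [] (X.imp α))
    (p2 : Prov [] (X.imp (Formula.box α)))
    (p3 : ∀ Γ, Prov Γ α → Prov Γ (Formula.box α) → Prov Γ X) :
    GLHilbert ((Formula.box α).imp (Formula.box (Formula.box α))) := by
  have hb1 : Prov [] ((Formula.box X).imp (Formula.box α)) := p1.boxed.distK
  have hb2 : Prov [] ((Formula.box X).imp (Formula.box (Formula.box α))) := p2.boxed.distK
  have h1 : Prov [] (α.imp ((Formula.box X).imp X)) := by
    apply Prov.ded; apply Prov.ded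
    have hx : Prov [Formula.box X, α] α := .hyp (by simp)
    have hbx : Prov [Formula.box X, α] (Formula.box X) := .hyp (by simp)
    exact p3 _ hx (Prov.mp (hb1.weak (by simp)) hbx)
  have h2 : Prov [] ((Formula.box α).imp (Formula.box ((Formula.box X).imp X))) :=
    h1.boxed.distK
  have h3 : Prov [] ((Formula.box α).imp (Formula.box X)) :=
    h2.comp (.thm (GLHilbert.axLob X))
  exact (h3.comp hb2).toGL

/-- The 4 axiom is derivable in GL. -/
theorem four (α : Formula) : GLHilbert ((Formula.box α).imp (Formula.box (Formula.box α))) :=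
  four_aux α (fand α (.box α))
    (Prov.ded (Prov.proj1 (Prov.hyp (List.mem_singleton_self (fand α (.box α))))))
    (Prov.ded (Prov.proj2 (Prov.hyp (List.mem_singleton_self (fand α (.box α))))))
    (fun _ a b => a.pair b)

/-! ### Consistency and the canonical model -/

/-- Negation. -/
def fneg (φ : Formula) : Formula := φ.imp .bot

/-- The pair (Γ, Δ) is consistent: Γ together with negations of Δ does not prove ⊥. -/
def Con (Γ Δ : Finset Formula) : Prop :=
  ¬ Prov (Γ.toList ++ Δ.toList.map fneg) Formula.bot

theorem mem_conList {Γ Δ : Finset Formula} {x : Formula} :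
    x ∈ Γ.toList ++ Δ.toList.map fneg ↔ (x ∈ Γ ∨ ∃ d ∈ Δ, x = fneg d) := by
  simp [eq_comm]

/-- From an inconsistency, a proof using membership-weakening. -/
theorem Con.not_prov {Γ Δ : Finset Formula} (h : Con Γ Δ) {L : List Formula}
    (hL : ∀ x ∈ L, x ∈ Γ ∨ ∃ d ∈ Δ, x = fneg d) (hp : Prov L .bot) : False :=
  h (hp.weak fun x hx => mem_conList.2 (hL x hx))

theorem con_mono {Γ Δ Γ' Δ' : Finset Formula} (h : Con Γ' Δ') (h1 : Γ ⊆ Γ') (h2 : Δ ⊆ Δ') :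
    Con Γ Δ := fun hp =>
  h (hp.weak fun x hx => mem_conList.2 (by
    rcases mem_conList.1 hx with h3 | ⟨d, hd, rfl⟩
    · exact Or.inl (h1 h3)
    · exact Or.inr ⟨d, h2 hd, rfl⟩))

theorem Con.disjoint {Γ Δ : Finset Formula} (h : Con Γ Δ) {x : Formula}
    (h1 : x ∈ Γ) (h2 : x ∈ Δ) : False := by
  refine h.not_prov (L := [fneg x, x]) ?_ ?_
  · rintro y hy
    rcases List.mem_pair.1 hy with rfl | rfl
    · exact Or.inr ⟨x, h2, rfl⟩
    · exact Or.inl h1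
  · have a : Prov [fneg x, x] (x.imp .bot) := .hyp (by simp [fneg])
    have b : Prov [fneg x, x] x := .hyp (by simp)
    exact a.mp b

theorem Con.bot_not_mem {Γ Δ : Finset Formula} (h : Con Γ Δ) : Formula.bot ∉ Γ := fun hb =>
  h.not_prov (L := [Formula.bot]) (by rintro y hy; simp at hy; subst hy; exact Or.inl hb)
    (.hyp (by simp))

/-- One-step Lindenbaum extension. -/
theorem con_extend {Γ Δ : Finset Formula} (h : Con Γ Δ) (χ : Formula) :
    Con (insert χ Γ) Δ ∨ Con Γ (insert χ Δ) := by
  by_contra hc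
  push_neg at hc
  simp only [Con, not_not] at hc
  obtain ⟨h1, h2⟩ := hc
  refine h ?_
  refine Prov.cases (φ := χ) ?_ ?_
  · refine h1.weak fun x hx => ?_
    rcases mem_conList.1 hx with h3 | ⟨d, hd, rfl⟩
    · rcases Finset.mem_insert.1 h3 with rfl | h3
      · exact List.mem_cons_self
      · exact List.mem_cons_of_mem _ (mem_conList.2 (Or.inl h3))
    · exact List.mem_cons_of_mem _ (mem_conList.2 (Or.inr ⟨d, hd, rfl⟩))
  · refine h2.weak fun x hx => ?_
    rcases mem_conList.1 hx with h3 | ⟨d, hd, rfl⟩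
    · exact List.mem_cons_of_mem _ (mem_conList.2 (Or.inl h3))
    · rcases Finset.mem_insert.1 hd with rfl | hd
      · exact List.mem_cons_self
      · exact List.mem_cons_of_mem _ (mem_conList.2 (Or.inr ⟨d, hd, rfl⟩))

/-- Lindenbaum lemma over a finite list. -/
theorem lindenbaum_list (L : List Formula) : ∀ {Γ Δ : Finset Formula}, Con Γ Δ →
    ∃ Γ' Δ', Γ ⊆ Γ' ∧ Δ ⊆ Δ' ∧ Con Γ' Δ' ∧ Γ' ∪ Δ' = Γ ∪ Δ ∪ L.toFinset := by
  induction L with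
  | nil => exact fun h => ⟨_, _, le_refl _, le_refl _, h, by simp⟩
  | cons χ L ih =>
    intro Γ Δ h
    rcases con_extend h χ with h' | h'
    · obtain ⟨Γ', Δ', hg, hd, hc, he⟩ := ih h'
      refine ⟨Γ', Δ', le_trans (Finset.subset_insert _ _) hg, hd, hc, ?_⟩
      rw [he]; ext x
      simp only [Finset.mem_union, List.mem_toFinset, Finset.mem_insert, List.mem_cons]; tauto
    · obtain ⟨Γ', Δ', hg, hd, hc, he⟩ := ih h'
      refine ⟨Γ', Δ', hg, le_trans (Finset.subset_insert _ _) hd, hc, ?_⟩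
      rw [he]; ext x
      simp only [Finset.mem_union, List.mem_toFinset, Finset.mem_insert, List.mem_cons]; tauto

theorem lindenbaum {S Γ Δ : Finset Formula} (h : Con Γ Δ) (hS : Γ ∪ Δ ⊆ S) :
    ∃ Γ' Δ', Γ ⊆ Γ' ∧ Δ ⊆ Δ' ∧ Con Γ' Δ' ∧ Γ' ∪ Δ' = S := by
  obtain ⟨Γ', Δ', hg, hd, hc, he⟩ := lindenbaum_list S.toList h
  refine ⟨Γ', Δ', hg, hd, hc, ?_⟩
  rw [he]
  ext x
  simp only [Finset.mem_union, List.mem_toFinset, Finset.mem_toList]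
  constructor
  · rintro ((h1 | h1) | h1)
    · exact hS (Finset.mem_union_left _ h1)
    · exact hS (Finset.mem_union_right _ h1)
    · exact h1
  · exact fun h1 => Or.inr h1

theorem mem_boxInv {Γ : Finset Formula} {α : Formula} :
    α ∈ boxInv Γ ↔ Formula.box α ∈ Γ := by
  simp only [boxInv, Finset.mem_image, Finset.mem_filter]
  constructor
  · rintro ⟨ψ, ⟨h1, h2⟩, rfl⟩
    cases ψ <;> simp_all [Formula.isBox, Formula.unbox]
  · exact fun h => ⟨Formula.box α, ⟨h, rfl⟩, rfl⟩

/-- Key modal step: if Γ_□ ∪ □Γ_□ ∪ {□ψ} proves ψ, then Γ proves □ψ. -/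
theorem box_successor_con {Γ Δ : Finset Formula} (h : Con Γ Δ) {ψ : Formula}
    (hψ : Formula.box ψ ∈ Δ) :
    Con (boxInv Γ ∪ (boxInv Γ).image Formula.box ∪ {Formula.box ψ}) {ψ} := by
  intro hp
  set B := boxInv Γ with hB
  -- move to an explicit list
  have hp2 : Prov (fneg ψ :: Formula.box ψ :: (B.toList.map Formula.box ++ B.toList))
      Formula.bot := by
    refine hp.weak fun x hx => ?_
    rcases mem_conList.1 hx with h3 | ⟨d, hd, rfl⟩
    · simp only [Finset.mem_union, Finset.mem_singleton, Finset.mem_image] at h3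
      rcases h3 with (h3 | ⟨b, hb, rfl⟩) | rfl
      · simp only [List.mem_cons, List.mem_append]; exact Or.inr (Or.inr (Or.inr (by simp [h3])))
      · simp only [List.mem_cons, List.mem_append]
        exact Or.inr (Or.inr (Or.inl (List.mem_map_of_mem (by simp [hb]))))
      · simp
    · simp only [Finset.mem_singleton] at hd; subst hd; simp
  have hp3 : Prov (Formula.box ψ :: (B.toList.map Formula.box ++ B.toList)) ψ :=
    hp2.ded.dne
  have hp4 : Prov (B.toList.map Formula.box ++ B.toList) ((Formula.box ψ).imp ψ) := hp3.ded
  -- box everything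
  have hp5 : Prov ((B.toList.map Formula.box ++ B.toList).map Formula.box)
      (Formula.box ((Formula.box ψ).imp ψ)) := hp4.boxed
  rw [List.map_append] at hp5
  have hp6 : Prov ((B.toList.map Formula.box).map Formula.box ++ B.toList.map Formula.box)
      (Formula.box ψ) := Prov.mp (.thm (GLHilbert.axLob ψ)) hp5
  -- discharge the doubly boxed hypotheses using 4
  have hp7 : Prov (B.toList.map Formula.box) (Formula.box ψ) := by
    refine hp6.cutList fun χ hχ => ?_
    simp only [List.mem_map] at hχ
    obtain ⟨b, ⟨b', hb', rfl⟩, rfl⟩ := hχ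
    exact Prov.mp (.thm (four b')) (.hyp (List.mem_map_of_mem hb'))
  -- contradiction with Con Γ Δ
  refine h.not_prov (L := fneg (Formula.box ψ) :: B.toList.map Formula.box) ?_ ?_
  · rintro x hx
    rcases List.mem_cons.1 hx with rfl | hx
    · exact Or.inr ⟨_, hψ, rfl⟩
    · obtain ⟨b, hb, rfl⟩ := List.mem_map.1 hx
      simp only [Finset.mem_toList] at hb
      exact Or.inl (mem_boxInv.1 (hB ▸ hb))
  · exact Prov.mp (.hyp (List.mem_cons_self)) (hp7.weak1)
/-! ### Subformula lemmas -/

theorem self_mem_subf (φ : Formula) : φ ∈ φ.subf := by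
  cases φ <;> simp [Formula.subf]

theorem subf_closed : ∀ (θ ψ : Formula), ψ ∈ θ.subf → ψ.subf ⊆ θ.subf := by
  intro θ
  induction θ with
  | var p => intro ψ h; simp [Formula.subf] at h; subst h; exact subset_rfl
  | bot => intro ψ h; simp [Formula.subf] at h; subst h; exact subset_rfl
  | imp a b iha ihb =>
    intro ψ h
    simp only [Formula.subf, Finset.mem_insert, Finset.mem_union] at h
    rcases h with rfl | h | h
    · exact subset_rfl
    · exact (iha ψ h).trans (by simp [Formula.subf, Finset.subset_insert_iff_of_notMem,
        Finset.subset_union_left]; intro x hx; simp [hx])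
    · exact (ihb ψ h).trans (by intro x hx; simp [Formula.subf, hx])
  | box a iha =>
    intro ψ h
    simp only [Formula.subf, Finset.mem_insert] at h
    rcases h with rfl | h
    · exact subset_rfl
    · exact (iha ψ h).trans (by intro x hx; simp [Formula.subf, hx])

/-- S is closed under subformulas. -/
def SClosed (S : Finset Formula) : Prop := ∀ ψ ∈ S, ψ.subf ⊆ S

/-! ### The canonical model -/

variable (S : Finset Formula)

/-- Worlds of the canonical model: full consistent splits of S. -/
def CW : Type := {s : Finset Formula × Finset Formula // s.1 ∪ s.2 = S ∧ Con s.1 s.2}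

/-- Canonical accessibility. -/
def CR (s t : CW S) : Prop :=
  boxInv s.1.1 ⊂ boxInv t.1.1 ∧ boxInv s.1.1 ∪ (boxInv s.1.1).image Formula.box ⊆ t.1.1

theorem CR_trans : Transitive (CR S) := by
  rintro s t u ⟨h1, h2⟩ ⟨h3, h4⟩
  refine ⟨h1.trans h3, Finset.union_subset ?_ ?_⟩
  · exact h1.subset.trans (Finset.subset_union_left.trans h4)
  · exact (Finset.image_subset_image h1.subset).trans (Finset.subset_union_right.trans h4)

theorem boxInv_card_bound (s : CW S) : (boxInv s.1.1).card ≤ (S.image Formula.unbox).card := by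
  apply Finset.card_le_card
  intro x hx
  simp only [boxInv, Finset.mem_image, Finset.mem_filter] at hx
  obtain ⟨ψ, ⟨h1, _⟩, rfl⟩ := hx
  exact Finset.mem_image_of_mem _ (s.2.1 ▸ Finset.mem_union_left _ h1)

theorem CR_cwf : ∀ f : ℕ → CW S, ¬ ∀ i, CR S (f i) (f (i + 1)) := by
  intro f hf
  have key : ∀ i, (boxInv (f 0).1.1).card + i ≤ (boxInv (f i).1.1).card := by
    intro i
    induction i with
    | zero => simp
    | succ n ih =>
      have := Finset.card_lt_card (hf n).1
      omega
  have h1 := key ((S.image Formula.unbox).card + 1)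
  have h2 := boxInv_card_bound S (f ((S.image Formula.unbox).card + 1))
  omega

/-- Canonical valuation. -/
def CV (s : CW S) (p : ℕ) : Prop := Formula.var p ∈ s.1.1

variable {S}

theorem CW.mem_S {s : CW S} {x : Formula} (h : x ∈ s.1.1 ∪ s.1.2) : x ∈ S := s.2.1 ▸ h

theorem CW.total {s : CW S} {x : Formula} (h : x ∈ S) : x ∈ s.1.1 ∨ x ∈ s.1.2 := by
  have := s.2.1
  rw [← this] at h
  exact Finset.mem_union.1 h

/-- Saturation from consistency: →L. -/
theorem CW.sat_impL (hS : SClosed S) {s : CW S} {α β : Formula} (h : α.imp β ∈ s.1.1) :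
    α ∈ s.1.2 ∨ β ∈ s.1.1 := by
  have hαS : α ∈ S := hS _ (CW.mem_S (Finset.mem_union_left _ h)) (by
    simp [Formula.subf, self_mem_subf])
  have hβS : β ∈ S := hS _ (CW.mem_S (Finset.mem_union_left _ h)) (by
    simp [Formula.subf, self_mem_subf])
  by_contra hc
  push_neg at hc
  obtain ⟨h1, h2⟩ := hc
  have hα : α ∈ s.1.1 := (CW.total hαS).resolve_right h1
  have hβ : β ∈ s.1.2 := (CW.total hβS).resolve_left h2
  refine s.2.2.not_prov (L := [fneg β, α.imp β, α]) ?_ ?_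
  · rintro x hx
    simp only [List.mem_cons, List.not_mem_nil, or_false] at hx
    rcases hx with rfl | rfl | rfl
    · exact Or.inr ⟨β, hβ, rfl⟩
    · exact Or.inl h
    · exact Or.inl hα
  · have a : Prov [fneg β, α.imp β, α] (β.imp .bot) := .hyp (by simp [fneg])
    have b : Prov [fneg β, α.imp β, α] (α.imp β) := .hyp (by simp)
    have c : Prov [fneg β, α.imp β, α] α := .hyp (by simp)
    exact a.mp (b.mp c)

/-- Saturation from consistency: →R. -/
theorem CW.sat_impR (hS : SClosed S) {s : CW S} {α β : Formula} (h : α.imp β ∈ s.1.2) :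
    α ∈ s.1.1 ∧ β ∈ s.1.2 := by
  have hαS : α ∈ S := hS _ (CW.mem_S (Finset.mem_union_right _ h)) (by
    simp [Formula.subf, self_mem_subf])
  have hβS : β ∈ S := hS _ (CW.mem_S (Finset.mem_union_right _ h)) (by
    simp [Formula.subf, self_mem_subf])
  constructor
  · refine (CW.total hαS).resolve_right fun h1 => ?_
    refine s.2.2.not_prov (L := [fneg (α.imp β), fneg α]) ?_ ?_
    · rintro x hx
      simp only [List.mem_cons, List.not_mem_nil, or_false] at hx
      rcases hx with rfl | rfl
      · exact Or.inr ⟨_, h, rfl⟩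
      · exact Or.inr ⟨_, h1, rfl⟩
    · have a : Prov [fneg (α.imp β), fneg α] ((α.imp β).imp .bot) := .hyp (by simp [fneg])
      refine a.mp ?_
      apply Prov.ded
      refine Prov.efq ?_ β
      have b : Prov (α :: [fneg (α.imp β), fneg α]) (α.imp .bot) := .hyp (by simp [fneg])
      exact b.mp (.hyp (by simp))
  · refine (CW.total hβS).resolve_left fun h1 => ?_
    refine s.2.2.not_prov (L := [fneg (α.imp β), β]) ?_ ?_
    · rintro x hx
      simp only [List.mem_cons, List.not_mem_nil, or_false] at hx
      rcases hx with rfl | rfl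
      · exact Or.inr ⟨_, h, rfl⟩
      · exact Or.inl h1
    · have a : Prov [fneg (α.imp β), β] ((α.imp β).imp .bot) := .hyp (by simp [fneg])
      exact a.mp (.mp (.thm (GLHilbert.ax1 β α)) (.hyp (by simp)))

/-- The successor world for the box-false case. -/
theorem CW.box_successor (hS : SClosed S) {s : CW S} {ψ : Formula}
    (h : Formula.box ψ ∈ s.1.2) :
    ∃ t : CW S, CR S s t ∧ ψ ∈ t.1.2 := by
  have hcon := box_successor_con s.2.2 h
  have hsub : (boxInv s.1.1 ∪ (boxInv s.1.1).image Formula.box ∪ {Formula.box ψ}) ∪ {ψ} ⊆ S := by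
    intro x hx
    simp only [Finset.mem_union, Finset.mem_singleton, Finset.mem_image] at hx
    rcases hx with ((hx | ⟨b, hb, rfl⟩) | rfl) | rfl
    · have : Formula.box x ∈ S := CW.mem_S (Finset.mem_union_left _ (mem_boxInv.1 hx))
      exact hS _ this (by simp [Formula.subf, self_mem_subf])
    · exact CW.mem_S (Finset.mem_union_left _ (mem_boxInv.1 hb))
    · exact CW.mem_S (Finset.mem_union_right _ h)
    · have hbS : Formula.box x ∈ S := CW.mem_S (Finset.mem_union_right _ h)
      exact hS _ hbS (by simp [Formula.subf, self_mem_subf])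
  obtain ⟨Γ', Δ', hg, hd, hc, he⟩ := lindenbaum hcon hsub
  refine ⟨⟨(Γ', Δ'), he, hc⟩, ⟨?_, (Finset.subset_union_left).trans hg⟩,
    hd (Finset.mem_singleton_self ψ)⟩
  rw [Finset.ssubset_def]
  constructor
  · intro x hx
    exact mem_boxInv.2 (hg (Finset.mem_union_left _ (Finset.mem_union_right _
      (Finset.mem_image_of_mem _ hx))))
  · intro hsub'
    have h2 : Formula.box ψ ∈ s.1.1 := mem_boxInv.1 (hsub' (mem_boxInv.2
      (hg (Finset.mem_union_right _ (Finset.mem_singleton_self _)))))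
    exact s.2.2.disjoint h2 h

/-- The truth lemma. -/
theorem truth_lemma (hS : SClosed S) : ∀ (ψ : Formula) (s : CW S),
    (ψ ∈ s.1.1 → KSat (CR S) (CV S) ψ s) ∧ (ψ ∈ s.1.2 → ¬ KSat (CR S) (CV S) ψ s) := by
  intro ψ
  induction ψ with
  | var p =>
    intro s
    refine ⟨fun h => h, fun h hsat => s.2.2.disjoint hsat h⟩
  | bot =>
    intro s
    exact ⟨fun h => absurd h s.2.2.bot_not_mem, fun _ h => h⟩
  | imp α β ihα ihβ =>
    intro s
    constructor
    · intro h hα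
      rcases CW.sat_impL hS h with h1 | h1
      · exact absurd hα ((ihα s).2 h1)
      · exact (ihβ s).1 h1
    · intro h hsat
      obtain ⟨h1, h2⟩ := CW.sat_impR hS h
      exact (ihβ s).2 h2 (hsat ((ihα s).1 h1))
  | box α ihα =>
    intro s
    constructor
    · intro h t hRt
      apply (ihα t).1
      exact hRt.2 (Finset.mem_union_left _ (mem_boxInv.2 h))
    · intro h hsat
      obtain ⟨t, hRt, hψ⟩ := CW.box_successor hS h
      exact (ihα t).2 hψ (hsat t hRt)
/-! ### Soundness -/

/-- Validity of Löb's axiom in converse well-founded models. -/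
theorem lob_valid (M : GLModel) (φ : Formula) (w : M.World)
    (h : M.sat w (Formula.box ((Formula.box φ).imp φ))) : M.sat w (Formula.box φ) := by
  by_contra hc
  have step : ∀ x : M.World, M.R w x ∧ ¬ M.sat x φ →
      ∃ y : M.World, (M.R w y ∧ ¬ M.sat y φ) ∧ M.R x y := by
    rintro x ⟨hRx, hx⟩
    have h1 : M.sat x ((Formula.box φ).imp φ) := h x hRx
    have h2 : ¬ M.sat x (Formula.box φ) := fun hb => hx (h1 hb)
    simp only [GLModel.sat, KSat, not_forall] at h2
    obtain ⟨y, hRy, hy⟩ := h2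
    exact ⟨y, ⟨M.trans hRx hRy, hy⟩, hRy⟩
  simp only [GLModel.sat, KSat, not_forall] at hc
  obtain ⟨x₀, hR₀, hx₀⟩ := hc
  let g : ℕ → {x : M.World // M.R w x ∧ ¬ M.sat x φ} := fun n =>
    Nat.rec ⟨x₀, hR₀, hx₀⟩
      (fun _ p => ⟨(step p.1 p.2).choose, (step p.1 p.2).choose_spec.1⟩) n
  refine M.cwf (fun n => (g n).1) fun i => ?_
  exact (step (g i).1 (g i).2).choose_spec.2

/-- Soundness of GL. -/
theorem gl_sound {φ : Formula} (h : GLHilbert φ) (M : GLModel) (w : M.World) : M.sat w φ := by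
  induction h generalizing w with
  | ax1 α β => exact fun h1 _ => h1
  | ax2 α β γ => exact fun h1 h2 h3 => h1 h3 (h2 h3)
  | ax3 α =>
    intro h1
    by_contra hc
    exact h1 hc
  | axK α β => exact fun h1 h2 x hx => h1 x hx (h2 x hx)
  | axLob α => exact fun h1 => lob_valid M α w h1
  | mp _ _ ih1 ih2 => exact ih1 w (ih2 w)
  | nec _ ih => exact fun x _ => ih x

/-- In a descending chain, later worlds see earlier ones. -/
theorem chain_R (M : GLModel) (f : ℕ → M.World) (hf : ∀ i, M.R (f (i + 1)) (f i)) :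
    ∀ j k, j < k → M.R (f k) (f j) := by
  intro j k hjk
  induction k with
  | zero => omega
  | succ n ih =>
    rcases Nat.lt_succ_iff_lt_or_eq.1 hjk with h | h
    · exact M.trans (hf n) (ih h)
    · exact h ▸ hf n

/-- Soundness of GLS on descending chains. -/
theorem gls_sound {φ : Formula} (h : GLSHilbert φ) (M : GLModel) (f : ℕ → M.World)
    (hf : ∀ i, M.R (f (i + 1)) (f i)) : ∃ i, ∀ j, i ≤ j → M.sat (f j) φ := by
  induction h with
  | gl h => exact ⟨0, fun j _ => gl_sound h M (f j)⟩
  | refl α =>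
    by_contra hc
    push_neg at hc
    obtain ⟨j₁, _, hj₁⟩ := hc 0
    obtain ⟨j₂, hj₂le, hj₂⟩ := hc (j₁ + 1)
    simp only [GLModel.sat, KSat, Classical.not_imp] at hj₁ hj₂
    exact hj₁.2 (hj₂.1 (f j₁) (chain_R M f hf j₁ j₂ (by omega)))
  | mp _ _ ih1 ih2 =>
    obtain ⟨i₁, h1⟩ := ih1
    obtain ⟨i₂, h2⟩ := ih2
    exact ⟨max i₁ i₂, fun j hj => h1 j (le_trans (le_max_left _ _) hj)
      (h2 j (le_trans (le_max_right _ _) hj))⟩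
/-! ### The extended model -/

section Ext

variable (M : GLModel) (w0 : M.World)

/-- Extended accessibility. -/
def ER : (M.World ⊕ ℕ) → (M.World ⊕ ℕ) → Prop
  | .inl x, .inl y => M.R x y
  | .inr _, .inl y => y = w0 ∨ M.R w0 y
  | .inr n, .inr m => m < n
  | .inl _, .inr _ => False

/-- Extended valuation. -/
def EV : (M.World ⊕ ℕ) → ℕ → Prop
  | .inl x, p => M.val x p
  | .inr _, p => M.val w0 p

theorem ER_trans : Transitive (ER M w0) := by
  rintro (x | n) (y | m) (z | k) h1 h2
  · exact M.trans h1 h2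
  · exact h2.elim
  · exact h1.elim
  · exact h1.elim
  · rcases h1 with rfl | h1
    · exact Or.inr h2
    · exact Or.inr (M.trans h1 h2)
  · exact h2.elim
  · exact h2
  · exact lt_trans h2 h1

theorem ER_cwf : ∀ f : ℕ → (M.World ⊕ ℕ), ¬ ∀ i, ER M w0 (f i) (f (i + 1)) := by
  intro f hf
  by_cases hex : ∃ k x, f k = Sum.inl x
  · obtain ⟨k, x, hk⟩ := hex
    have hstep : ∀ j, ∃ y, f (k + j) = Sum.inl y := by
      intro j
      induction j with
      | zero => exact ⟨x, hk⟩
      | succ m ih =>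
        obtain ⟨y, hy⟩ := ih
        have h1 := hf (k + m)
        rw [hy] at h1
        rcases he : f (k + m + 1) with z | n
        · rw [Nat.add_assoc] at he; exact ⟨z, rfl⟩
        · rw [he] at h1; exact h1.elim
    have hne : Nonempty M.World := M.ne
    let g : ℕ → M.World := fun j => (f (k + j)).elim id (fun _ => Classical.arbitrary _)
    have hg : ∀ j, f (k + j) = Sum.inl (g j) := by
      intro j
      obtain ⟨y, hy⟩ := hstep j
      simp only [g, hy, Sum.elim_inl, id]
    refine M.cwf g fun j => ?_
    have h1 := hf (k + j)
    rw [hg j] at h1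
    rw [show k + j + 1 = k + (j + 1) by omega, hg (j + 1)] at h1
    exact h1
  · push_neg at hex
    let n : ℕ → ℕ := fun k => (f k).elim (fun _ => 0) id
    have hn : ∀ k, f k = Sum.inr (n k) := by
      intro k
      rcases he : f k with x | m
      · exact absurd he (hex k x)
      · simp only [n, he, Sum.elim_inr, id]
    have hdec : ∀ k, n (k + 1) < n k := by
      intro k
      have h1 := hf k
      rw [hn k, hn (k + 1)] at h1
      exact h1
    have hle : ∀ k, n k + k ≤ n 0 := by
      intro k
      induction k with
      | zero => omega
      | succ m ih => have := hdec m; omega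
    have := hle (n 0 + 1)
    omega

/-- The extended GL-model. -/
def Mext : GLModel where
  World := M.World ⊕ ℕ
  ne := ⟨Sum.inr 0⟩
  R := ER M w0
  trans := ER_trans M w0
  cwf := ER_cwf M w0
  val := EV M w0

theorem ext_sat_inl : ∀ (ψ : Formula) (x : M.World),
    KSat (ER M w0) (EV M w0) ψ (Sum.inl x) ↔ KSat M.R M.val ψ x := by
  intro ψ
  induction ψ with
  | var p => exact fun x => Iff.rfl
  | bot => exact fun x => Iff.rfl
  | imp α β ihα ihβ =>
    intro x
    constructor
    · exact fun h hα => (ihβ x).1 (h ((ihα x).2 hα))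
    · exact fun h hα => (ihβ x).2 (h ((ihα x).1 hα))
  | box α ihα =>
    intro x
    constructor
    · exact fun h y hy => (ihα y).1 (h (Sum.inl y) hy)
    · rintro h (y | m) hw
      · exact (ihα y).2 (h y hw)
      · exact hw.elim

theorem ext_sat_inr (Φ : Finset Formula) (hcl : ∀ ψ ∈ Φ, ψ.subf ⊆ Φ)
    (hrefl : ∀ ψ, Formula.box ψ ∈ Φ →
      KSat M.R M.val (Formula.box ψ) w0 → KSat M.R M.val ψ w0) :
    ∀ ψ, ψ ∈ Φ → ∀ n, (KSat (ER M w0) (EV M w0) ψ (Sum.inr n) ↔ KSat M.R M.val ψ w0) := by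
  intro ψ
  induction ψ with
  | var p => exact fun _ _ => Iff.rfl
  | bot => exact fun _ _ => Iff.rfl
  | imp α β ihα ihβ =>
    intro hmem n
    have hα : α ∈ Φ := hcl _ hmem (by simp [Formula.subf, self_mem_subf])
    have hβ : β ∈ Φ := hcl _ hmem (by simp [Formula.subf, self_mem_subf])
    constructor
    · exact fun h h1 => (ihβ hβ n).1 (h ((ihα hα n).2 h1))
    · exact fun h h1 => (ihβ hβ n).2 (h ((ihα hα n).1 h1))
  | box α ihα =>
    intro hmem n
    have hα : α ∈ Φ := hcl _ hmem (by simp [Formula.subf, self_mem_subf])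
    constructor
    · intro h y hy
      exact (ext_sat_inl M w0 α y).1 (h (Sum.inl y) (Or.inr hy))
    · rintro h (y | m) hw
      · rcases hw with rfl | hw
        · exact (ext_sat_inl M y α y).2 (hrefl α hmem h)
        · exact (ext_sat_inl M w0 α y).2 (h y hw)
      · exact (ihα hα m).2 (hrefl α hmem h)

end Ext

theorem Prov.toGLS {L : List Formula} {φ : Formula} (h : Prov L φ)
    (hL : ∀ x ∈ L, GLSHilbert x) : GLSHilbert φ := by
  induction h with
  | hyp h => exact hL _ h
  | thm h => exact .gl h
  | mp _ _ ih1 ih2 => exact ih1.mp ih2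

end C3Aux

open C3Aux in
/-- Characterization C3: φ is a theorem of GLS iff on every infinitely descending
sequence of every GL-model, φ is eventually always true. -/
theorem gls_characterization_c3 (φ : Formula) :
    GLSHilbert φ ↔
      ∀ (M : GLModel) (f : ℕ → M.World), (∀ i, M.R (f (i + 1)) (f i)) →
        ∃ i, ∀ j, i ≤ j → M.sat (f j) φ := by
  constructor
  · exact fun h M f hf => gls_sound h M f hf
  · intro hsem
    by_contra hφ
    set Refl : Finset Formula :=
      (φ.subf.filter fun ψ => ψ.isBox).image (fun β => β.imp β.unbox) with hRefl
    have hreflmem : ∀ ψ : Formula, Formula.box ψ ∈ φ.subf →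
        (Formula.box ψ).imp ψ ∈ Refl := by
      intro ψ hψ
      rw [hRefl]
      apply Finset.mem_image.2
      exact ⟨Formula.box ψ, Finset.mem_filter.2 ⟨hψ, rfl⟩, rfl⟩
    have hcon : Con Refl {φ} := by
      intro hp
      apply hφ
      have hp2 : Prov (fneg φ :: Refl.toList) Formula.bot := by
        refine hp.weak fun x hx => ?_
        rcases mem_conList.1 hx with h1 | ⟨d, hd, rfl⟩
        · exact List.mem_cons_of_mem _ (Finset.mem_toList.2 h1)
        · simp only [Finset.mem_singleton] at hd
          subst hd
          exact List.mem_cons_self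
      have hp3 : Prov Refl.toList φ := hp2.ded.dne
      refine hp3.toGLS fun x hx => ?_
      rw [Finset.mem_toList, hRefl] at hx
      obtain ⟨β, hβ, rfl⟩ := Finset.mem_image.1 hx
      rw [Finset.mem_filter] at hβ
      cases β with
      | box α => exact GLSHilbert.refl α
      | var p => simp [Formula.isBox] at hβ
      | bot => simp [Formula.isBox] at hβ
      | imp a b => simp [Formula.isBox] at hβ
    set S : Finset Formula := φ.subf ∪ Refl with hS
    have hclS : SClosed S := by
      intro ψ hψ
      rcases Finset.mem_union.1 hψ with h1 | h1
      · exact (subf_closed φ ψ h1).trans Finset.subset_union_left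
      · rw [hRefl] at h1
        obtain ⟨β, hβ, rfl⟩ := Finset.mem_image.1 h1
        rw [Finset.mem_filter] at hβ
        cases β with
        | var p => simp [Formula.isBox] at hβ
        | bot => simp [Formula.isBox] at hβ
        | imp a b => simp [Formula.isBox] at hβ
        | box α =>
          intro x hx
          simp only [Formula.unbox, Formula.subf, Finset.mem_insert, Finset.mem_union] at hx
          have hαφ : α ∈ φ.subf :=
            subf_closed φ _ hβ.1 (by simp [Formula.subf, self_mem_subf])
          rcases hx with rfl | (rfl | hx) | hx
          · exact Finset.mem_union_right _ (hreflmem α hβ.1)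
          · exact Finset.mem_union_left _ hβ.1
          · exact Finset.mem_union_left _ (subf_closed φ α hαφ hx)
          · exact Finset.mem_union_left _ (subf_closed φ α hαφ hx)
    have hsub0 : Refl ∪ {φ} ⊆ S := by
      rw [hS]
      apply Finset.union_subset
      · exact Finset.subset_union_right
      · exact Finset.singleton_subset_iff.2 (Finset.mem_union_left _ (self_mem_subf φ))
    obtain ⟨Γp, Δp, hg, hd, hc, he⟩ := lindenbaum hcon hsub0
    let wp : CW S := ⟨(Γp, Δp), he, hc⟩
    let M0 : GLModel :=
      ⟨CW S, ⟨wp⟩, CR S, CR_trans S, CR_cwf S, CV S⟩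
    have htruth := truth_lemma hclS
    have hrefl : ∀ ψ : Formula, Formula.box ψ ∈ φ.subf →
        KSat (CR S) (CV S) (Formula.box ψ) wp → KSat (CR S) (CV S) ψ wp := by
      intro ψ hψ
      have hmem : (Formula.box ψ).imp ψ ∈ Γp := hg (hreflmem ψ hψ)
      exact (htruth ((Formula.box ψ).imp ψ) wp).1 hmem
    have hφfalse : ¬ KSat (CR S) (CV S) φ wp :=
      (htruth φ wp).2 (hd (Finset.mem_singleton_self φ))
    obtain ⟨i, hi⟩ := hsem (Mext M0 wp) (fun n => Sum.inr n)
      (fun i => Nat.lt_succ_self i)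
    have hsat := hi i le_rfl
    exact hφfalse ((ext_sat_inr M0 wp φ.subf (fun ψ h => subf_closed φ ψ h) hrefl φ
      (self_mem_subf φ) i).1 hsat)
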